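/- Each characteristic field of the discrete velocity traffic system is linearly degenerate: for every i = 0,…,N, the gradient of λ_i (as a function of (f_0,…,f_N)) is orthogonal to the eigenvector r_i, i.e. ∇λ_i · r_i = 0. -/

import Mathlib

/-- Each characteristic field is linearly degenerate: the gradient of
`λ_i` (as a function of `f`) is orthogonal to the eigenvector `r_i`, i.e. `∇λ_i · r_i = 0`
(formulated as the directional derivative of `λ_i` in the direction `r_i` vanishing). -/
theorem stmt3 (N : ℕ) (hN : 1 ≤ N) (v : Fin (N+1) → ℝ)
    (hv : StrictMono v) (hv0 : v 0 = 0) (hvN : v (Fin.last N) = 1)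
    (lam : Fin (N+1) → (Fin (N+1) → ℝ) → ℝ)
    (hlam : ∀ i g, lam i g =
      v i - (1/(1 - ∑ j, g j)) * ∑ j ∈ Finset.Ioi i, (v j - v i) * g j)
    (f : Fin (N+1) → ℝ) (hf : ∀ i, 0 ≤ f i) (hρ : ∑ i, f i < 1)
    (r : Fin (N+1) → Fin (N+1) → ℝ)
    (hr : ∀ i j, r i j = if j < i then 0 else if j = i then 1
      else -f j / (1 - ∑ l ∈ Finset.Iic i, f l)) :
    ∀ i, fderiv ℝ (lam i) f (r i) = 0 := by
  intro i
  have ha : (1 : ℝ) - ∑ j, f j ≠ 0 := by linarith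
  have hAle : (∑ l ∈ Finset.Iic i, f l) ≤ ∑ j, f j :=
    Finset.sum_le_sum_of_subset_of_nonneg (Finset.subset_univ _) (fun j _ _ => hf j)
  have hc : (1 : ℝ) - ∑ l ∈ Finset.Iic i, f l ≠ 0 := by
    have : (∑ l ∈ Finset.Iic i, f l) < 1 := lt_of_le_of_lt hAle hρ
    linarith
  set c1 : Fin (N+1) → ℝ := fun j => if i < j then v j - v i else 0 with hc1
  set L1 : (Fin (N+1) → ℝ) →L[ℝ] ℝ :=
    ∑ j, c1 j • (ContinuousLinearMap.proj j : (Fin (N+1) → ℝ) →L[ℝ] ℝ) with hL1def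
  set L2 : (Fin (N+1) → ℝ) →L[ℝ] ℝ :=
    ∑ j, (ContinuousLinearMap.proj j : (Fin (N+1) → ℝ) →L[ℝ] ℝ) with hL2def
  have hIoi : Finset.Ioi i = Finset.univ.filter (fun j => i < j) := by
    ext j; simp
  have hL1 : ∀ g, L1 g = ∑ j ∈ Finset.Ioi i, (v j - v i) * g j := by
    intro g
    rw [hIoi, Finset.sum_filter, hL1def]
    simp only [ContinuousLinearMap.sum_apply, ContinuousLinearMap.smul_apply,
      ContinuousLinearMap.proj_apply, smul_eq_mul, hc1]
    refine Finset.sum_congr rfl fun j _ => ?_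
    by_cases h : i < j <;> simp [h]
  have hL2 : ∀ g, L2 g = ∑ j, g j := by
    intro g
    rw [hL2def]
    simp [ContinuousLinearMap.sum_apply, ContinuousLinearMap.proj_apply]
  have hL2f : (1 : ℝ) - L2 f ≠ 0 := by rw [hL2]; exact ha
  have hF : HasFDerivAt (fun g : Fin (N+1) → ℝ => 1 - L2 g) (-L2) f := by
    simpa using (hasFDerivAt_const (1:ℝ) f).fun_sub L2.hasFDerivAt
  have hG : HasFDerivAt (fun g : Fin (N+1) → ℝ => (1 - L2 g)⁻¹)
      ((-(((1 - L2 f)^2)⁻¹)) • (-L2)) f :=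
    (hasDerivAt_inv hL2f).comp_hasFDerivAt f hF
  have hmul : HasFDerivAt (fun g : Fin (N+1) → ℝ => (1 - L2 g)⁻¹ * L1 g)
      ((1 - L2 f)⁻¹ • (L1 : (Fin (N+1) → ℝ) →L[ℝ] ℝ)
        + L1 f • ((-(((1 - L2 f)^2)⁻¹)) • (-L2))) f :=
    hG.mul L1.hasFDerivAt
  have hlamD : HasFDerivAt (lam i)
      (0 - ((1 - L2 f)⁻¹ • (L1 : (Fin (N+1) → ℝ) →L[ℝ] ℝ)
        + L1 f • ((-(((1 - L2 f)^2)⁻¹)) • (-L2)))) f := by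
    have heq : (fun g : Fin (N+1) → ℝ => v i - (1 - L2 g)⁻¹ * L1 g) = lam i := by
      funext g
      rw [hlam, hL1, hL2, one_div]
    rw [← heq]
    simpa using (hasFDerivAt_const (v i) f).fun_sub hmul
  rw [hlamD.fderiv]
  -- evaluate the sums on r i
  have hrii : r i i = 1 := by rw [hr]; simp
  have hIic : ∀ j ∈ Finset.Iio i, r i j = 0 := by
    intro j hj
    rw [hr]
    simp [Finset.mem_Iio.mp hj, (Finset.mem_Iio.mp hj).ne]
  have hrgt : ∀ j ∈ Finset.Ioi i, r i j = -f j / (1 - ∑ l ∈ Finset.Iic i, f l) := by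
    intro j hj
    have hj' := Finset.mem_Ioi.mp hj
    rw [hr]
    simp [not_lt_of_gt hj', hj'.ne']
  have hfilt1 : Finset.univ.filter (fun j => j ≤ i) = Finset.Iic i := by ext j; simp
  have hfilt2 : Finset.univ.filter (fun j => ¬ j ≤ i) = Finset.Ioi i := by ext j; simp
  have hsplit : ∀ h : Fin (N+1) → ℝ,
      ∑ j, h j = (∑ j ∈ Finset.Iio i, h j) + h i + ∑ j ∈ Finset.Ioi i, h j := by
    intro h
    rw [← Finset.sum_filter_add_sum_filter_not Finset.univ (fun j => j ≤ i), hfilt1, hfilt2]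
    congr 1
    rw [← Finset.Iio_insert, Finset.sum_insert (by simp)]
    ring
  have hL2r : L2 (r i) = 1 - (∑ j ∈ Finset.Ioi i, f j) / (1 - ∑ l ∈ Finset.Iic i, f l) := by
    rw [hL2, hsplit, Finset.sum_eq_zero hIic, hrii, Finset.sum_congr rfl hrgt]
    have : ∑ j ∈ Finset.Ioi i, -f j / (1 - ∑ l ∈ Finset.Iic i, f l)
        = -((∑ j ∈ Finset.Ioi i, f j) / (1 - ∑ l ∈ Finset.Iic i, f l)) := by
      rw [← Finset.sum_div, Finset.sum_neg_distrib, neg_div]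
    rw [this]; ring
  have hL1r : L1 (r i) = -(L1 f) / (1 - ∑ l ∈ Finset.Iic i, f l) := by
    rw [hL1, hL1, Finset.sum_congr rfl (fun j hj => by rw [hrgt j hj])]
    have : ∀ j, (v j - v i) * (-f j / (1 - ∑ l ∈ Finset.Iic i, f l))
        = -((v j - v i) * f j) / (1 - ∑ l ∈ Finset.Iic i, f l) := by
      intro j; ring
    rw [Finset.sum_congr rfl (fun j _ => this j), ← Finset.sum_div,
      Finset.sum_neg_distrib, neg_div]
  have hL2fS : L2 f = ∑ j, f j := hL2 f
  have hSsplit : (∑ j, f j) = (∑ l ∈ Finset.Iic i, f l) + ∑ j ∈ Finset.Ioi i, f j := by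
    rw [hsplit f, ← Finset.Iio_insert, Finset.sum_insert (by simp)]
    ring
  simp only [ContinuousLinearMap.sub_apply, ContinuousLinearMap.zero_apply,
    ContinuousLinearMap.add_apply, ContinuousLinearMap.smul_apply,
    ContinuousLinearMap.neg_apply, smul_eq_mul]
  rw [hL1r, hL2r, hL2fS]
  set A := ∑ l ∈ Finset.Iic i, f l
  set B := ∑ j ∈ Finset.Ioi i, f j
  have hSA : (∑ j, f j) = A + B := hSsplit
  rw [hSA] at ha ⊢
  field_simp
  ring
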